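/- arXiv:1905.00057 — 3 statements merged into one kernel-verified Lean document; each statement's English description precedes it below -/
import Mathlib

section
/- The characteristic polynomial of the multiplier matrix of the four-state Grover walk, M(θ₁,θ₂) = (1/2)·diag(e^{iθ₁}, e^{−iθ₁}, e^{iθ₂}, e^{−iθ₂}) applied row-wise to G₄, equals (λ² − 1)(λ² + (cos θ₁ + cos θ₂)λ + 1). -/
set_option maxHeartbeats 1600000 in
open Complex Polynomial in
/-- The characteristic polynomial of the multiplier matrix of the four-state Grover
walk equals `(λ² − 1)(λ² + (cos θ₁ + cos θ₂)λ + 1)`. -/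
theorem grover4_multiplier_charpoly (θ₁ θ₂ : ℝ) :
    let G : Matrix (Fin 4) (Fin 4) ℂ :=
      (1 / 2 : ℂ) • Matrix.of ![![-1, 1, 1, 1], ![1, -1, 1, 1],
        ![1, 1, -1, 1], ![1, 1, 1, -1]]
    let dvec : Fin 4 → ℂ :=
      ![exp (I * θ₁), exp (-(I * θ₁)), exp (I * θ₂), exp (-(I * θ₂))]
    let M : Matrix (Fin 4) (Fin 4) ℂ := Matrix.of fun i j => dvec i * G i j
    M.charpoly = (X ^ 2 - 1) *
      (X ^ 2 + C ((Real.cos θ₁ + Real.cos θ₂ : ℝ) : ℂ) * X + 1) := by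
  intro G dvec M
  set A : Polynomial ℂ := C (exp (I * θ₁)) with hA
  set B : Polynomial ℂ := C (exp (-(I * θ₁))) with hB
  set Cc : Polynomial ℂ := C (exp (I * θ₂)) with hCc
  set D : Polynomial ℂ := C (exp (-(I * θ₂))) with hD
  set H : Polynomial ℂ := C ((2⁻¹ : ℂ)) with hH
  have h1 : A * B = 1 := by
    rw [hA, hB, ← C_mul, ← Complex.exp_add]; simp
  have h2 : Cc * D = 1 := by
    rw [hCc, hD, ← C_mul, ← Complex.exp_add]; simp
  have h3 : (2 : Polynomial ℂ) * H = 1 := by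
    rw [hH, ← map_ofNat (C : ℂ →+* Polynomial ℂ) 2, ← C_mul]
    norm_num
  have hc : (((Real.cos θ₁ + Real.cos θ₂ : ℝ)) : ℂ) =
      2⁻¹ * (exp (I * θ₁) + exp (-(I * θ₁)) + exp (I * θ₂) + exp (-(I * θ₂))) := by
    push_cast
    rw [Complex.cos, Complex.cos, mul_comm I (θ₁ : ℂ), mul_comm I (θ₂ : ℂ)]
    ring_nf
  have h4 : C (((Real.cos θ₁ + Real.cos θ₂ : ℝ)) : ℂ) = H * (A + B + Cc + D) := by
    rw [hc, C_mul, C_add, C_add, C_add]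
  rw [Matrix.charpoly, h4]
  simp [Matrix.det_succ_row_zero, Fin.sum_univ_succ, Matrix.charmatrix_apply, M, G, dvec,
    Matrix.one_apply, Fin.succ_ne_zero, map_div₀, map_ofNat, Matrix.diagonal_apply,
    show (Fin.succ 2 : Fin 4) = 3 from rfl, show (Fin.succ 1 : Fin 4) = 2 from rfl,
    Fin.succAbove, Fin.castSucc, Fin.castAdd, Fin.castLE, one_div,
    ← hA, ← hB, ← hCc, ← hD, ← hH]
  linear_combination
    (-4*D*X*H^3 - 4*Cc*X*H^3 - 16*Cc*D*H^4) * h1 +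
    (-16*H^4 - 4*B*X*H^3 - 4*A*X*H^3) * h2 +
    (-1 - 2*H - 4*H^2 - 8*H^3 - D*X*H - 2*D*X*H^2 - Cc*X*H - 2*Cc*X*H^2
      - B*X*H - 2*B*X*H^2 - A*X*H - 2*A*X*H^2) * h3
end

section
/- The map (θ₁, θ₂) ↦ (sin θ₁, sin θ₂)/√(4 − (cos θ₁ + cos θ₂)²), defined where (cos θ₁+cos θ₂)² < 4, is surjective onto the open disk {(X₁,X₂) : 2X₁² + 2X₂² < 1}. -/
/-- The parameterization of the four-state Grover walk's region of polynomial decay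
is surjective onto the open disk `2X₁² + 2X₂² < 1`. -/
theorem grover4_decay_region_surjective (X₁ X₂ : ℝ)
    (hX : 2 * X₁ ^ 2 + 2 * X₂ ^ 2 < 1) :
    ∃ θ₁ θ₂ : ℝ, (Real.cos θ₁ + Real.cos θ₂) ^ 2 < 4 ∧
      Real.sin θ₁ / Real.sqrt (4 - (Real.cos θ₁ + Real.cos θ₂) ^ 2) = X₁ ∧
      Real.sin θ₂ / Real.sqrt (4 - (Real.cos θ₁ + Real.cos θ₂) ^ 2) = X₂ := by
  set a : ℝ := X₁ ^ 2 with ha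
  set b : ℝ := X₂ ^ 2 with hb
  have hτ : (0:ℝ) < 1 - 2*a - 2*b := by nlinarith
  set τ : ℝ := 1 - 2*a - 2*b with hτdef
  set D : ℝ := τ + (a - b)^2 with hDdef
  have hD0 : 0 < D := by nlinarith [sq_nonneg (a - b)]
  have hsD : 0 < Real.sqrt D := Real.sqrt_pos.mpr hD0
  have hsD2 : Real.sqrt D ^ 2 = D := Real.sq_sqrt hD0.le
  have hst : 0 < Real.sqrt τ := Real.sqrt_pos.mpr hτ
  have hst2 : Real.sqrt τ ^ 2 = τ := Real.sq_sqrt hτ.le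
  set z₁ : ℂ := ⟨(1 - 3*a - b)/Real.sqrt D, 2*X₁*Real.sqrt τ/Real.sqrt D⟩ with hz₁
  set z₂ : ℂ := ⟨-(1 - a - 3*b)/Real.sqrt D, 2*X₂*Real.sqrt τ/Real.sqrt D⟩ with hz₂
  have habs₁ : ‖z₁‖ = 1 := by
    rw [Complex.norm_def, Complex.normSq_mk]
    have : (1 - 3*a - b)/Real.sqrt D * ((1 - 3*a - b)/Real.sqrt D) +
        2*X₁*Real.sqrt τ/Real.sqrt D * (2*X₁*Real.sqrt τ/Real.sqrt D) = 1 := by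
      field_simp
      nlinarith [hst2, hsD2]
    rw [this, Real.sqrt_one]
  have habs₂ : ‖z₂‖ = 1 := by
    rw [Complex.norm_def, Complex.normSq_mk]
    have : -(1 - a - 3*b)/Real.sqrt D * (-(1 - a - 3*b)/Real.sqrt D) +
        2*X₂*Real.sqrt τ/Real.sqrt D * (2*X₂*Real.sqrt τ/Real.sqrt D) = 1 := by
      field_simp
      nlinarith [hst2, hsD2]
    rw [this, Real.sqrt_one]
  have hz₁0 : z₁ ≠ 0 := by
    intro h; rw [h, norm_zero] at habs₁; exact one_ne_zero habs₁.symm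
  have hz₂0 : z₂ ≠ 0 := by
    intro h; rw [h, norm_zero] at habs₂; exact one_ne_zero habs₂.symm
  have hc₁ : Real.cos z₁.arg = (1 - 3*a - b)/Real.sqrt D := by
    rw [Complex.cos_arg hz₁0, habs₁, div_one]
  have hc₂ : Real.cos z₂.arg = -(1 - a - 3*b)/Real.sqrt D := by
    rw [Complex.cos_arg hz₂0, habs₂, div_one]
  have hs₁ : Real.sin z₁.arg = 2*X₁*Real.sqrt τ/Real.sqrt D := by
    rw [Complex.sin_arg, habs₁, div_one]
  have hsum : Real.cos z₁.arg + Real.cos z₂.arg = (2*b - 2*a)/Real.sqrt D := by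
    rw [hc₁, hc₂]; ring
  have hs₂ : Real.sin z₂.arg = 2*X₂*Real.sqrt τ/Real.sqrt D := by
    rw [Complex.sin_arg, habs₂, div_one]
  have hlt : (Real.cos z₁.arg + Real.cos z₂.arg) ^ 2 < 4 := by
    rw [hsum, div_pow]
    rw [div_lt_iff₀ (by positivity), hsD2]
    nlinarith [sq_nonneg (a-b)]
  have hkey : Real.sqrt (4 - (Real.cos z₁.arg + Real.cos z₂.arg) ^ 2)
      = 2*Real.sqrt τ/Real.sqrt D := by
    have h4 : 4 - (Real.cos z₁.arg + Real.cos z₂.arg) ^ 2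
        = (2*Real.sqrt τ/Real.sqrt D)^2 := by
      rw [hsum, div_pow, div_pow, mul_pow, hst2, hsD2]
      field_simp
      linear_combination 4*hDdef
    rw [h4, Real.sqrt_sq (by positivity)]
  refine ⟨z₁.arg, z₂.arg, hlt, ?_, ?_⟩
  · rw [hs₁, hkey]
    field_simp
  · rw [hs₂, hkey]
    field_simp
end

section
/- The characteristic polynomial of the 6×6 multiplier matrix of the hexagonal Grover walk equals (λ² − 1)·(λ⁴ − (2/9)(4cos 2θ₂ + 8cos 3θ₁ cos θ₂ − 3)λ² + 1). -/
open Matrix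

set_option maxHeartbeats 2000000 in
lemma hex_key (x y a c b d : ℂ) (hx : x * y = 1) (ha : a * c = 1) (hb : b * d = 1) :
    (Matrix.fromBlocks (x • (1 : Matrix (Fin 3) (Fin 3) ℂ))
      (-(!![-(a^2)/3, 2*(a^2)/3, 2*(a^2)/3;
          2*(b*c)/3, -(b*c)/3, 2*(b*c)/3;
          2*(c*d)/3, 2*(c*d)/3, -(c*d)/3]))
      (-(!![-(c^2)/3, 2*(c^2)/3, 2*(c^2)/3;
          2*(a*d)/3, -(a*d)/3, 2*(a*d)/3;
          2*(a*b)/3, 2*(a*b)/3, -(a*b)/3]))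
      (x • (1 : Matrix (Fin 3) (Fin 3) ℂ))).det
    = (x^2-1)*(x^4 - (2/9)*(2*((b*b)+(d*d))+2*((a*a*a)+(c*c*c))*(b+d)-3)*x^2+1) := by
  haveI : Invertible (x • (1 : Matrix (Fin 3) (Fin 3) ℂ)) :=
    ⟨y • 1, by rw [smul_mul_assoc, mul_smul_comm, smul_smul, one_mul, mul_comm y x, hx, one_smul],
      by rw [smul_mul_assoc, mul_smul_comm, smul_smul, one_mul, hx, one_smul]⟩
  have hinv : ⅟(x • (1 : Matrix (Fin 3) (Fin 3) ℂ)) = y • 1 :=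
    invOf_eq_right_inv (by rw [smul_mul_assoc, mul_smul_comm, smul_smul, one_mul, hx, one_smul])
  rw [Matrix.det_fromBlocks₂₂, hinv]
  have e1 : (Matrix.det (x • (1 : Matrix (Fin 3) (Fin 3) ℂ))) = x^3 := by
    simp [Matrix.det_smul]
  rw [e1]
  rw [show ∀ (P Q : Matrix (Fin 3) (Fin 3) ℂ), x • (1:Matrix (Fin 3) (Fin 3) ℂ) - P * y • 1 * Q
      = x • 1 - y • (P * Q) from fun P Q => by
    rw [Matrix.mul_smul, Matrix.mul_one, Matrix.smul_mul]]
  rw [Matrix.one_fin_three, Matrix.det_fin_three]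
  simp only [Matrix.sub_apply, Matrix.smul_apply, Matrix.mul_apply, Fin.sum_univ_three,
    Matrix.cons_val', Matrix.cons_val_zero, Matrix.cons_val_one, Matrix.head_cons,
    Matrix.head_fin_const, Matrix.cons_val_two, Matrix.tail_cons, Matrix.neg_apply,
    smul_eq_mul, Matrix.vecHead, Matrix.vecTail]
  norm_num
  simp only [Matrix.cons_val]
  linear_combination ((-1)*a^4*c^4*b^2*d^2 + (-1)*x*y*a^4*c^4*b^2*d^2 + (4/9)*x^2*a*c^4*b*d^2 + (4/9)*x^2*a*c^4*b^2*d + (1/9)*x^2*a^2*c^2*b^2*d^2 + (4/9)*x^2*a^3*c^3*d^2 + (2/9)*x^2*a^3*c^3*b*d + (4/9)*x^2*a^3*c^3*b^2 + (4/9)*x^2*a^4*c*b*d^2 + (4/9)*x^2*a^4*c*b^2*d + (-1)*x^2*y^2*a^4*c^4*b^2*d^2 + (4/9)*x^3*y*a*c^4*b*d^2 + (4/9)*x^3*y*a*c^4*b^2*d + (1/9)*x^3*y*a^2*c^2*b^2*d^2 + (4/9)*x^3*y*a^3*c^3*d^2 + (2/9)*x^3*y*a^3*c^3*b*d + (4/9)*x^3*y*a^3*c^3*b^2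 + (4/9)*x^3*y*a^4*c*b*d^2 + (4/9)*x^3*y*a^4*c*b^2*d + (-4/9)*x^4*c^3*d + (-4/9)*x^4*c^3*b + (-4/9)*x^4*a*c*d^2 + (-2/9)*x^4*a*c*b*d + (-4/9)*x^4*a*c*b^2 + (-1/9)*x^4*a^2*c^2 + (-4/9)*x^4*a^3*d + (-4/9)*x^4*a^3*b) * hx + ((-1)*b^2*d^2 + (-1)*a*c*b^2*d^2 + (-1)*a^2*c^2*b^2*d^2 + (-1)*a^3*c^3*b^2*d^2 + (4/9)*x^2*d^2 + (2/9)*x^2*b*d + (4/9)*x^2*b^2 + (1/9)*x^2*b^2*d^2 + (4/9)*x^2*c^3*b*d^2 + (4/9)*x^2*c^3*b^2*d + (4/9)*x^2*a*c*d^2 + (2/9)*x^2*a*c*b*d + (4/9)*x^2*a*c*b^2 + (1/9)*x^2*a*c*b^2*d^2 + (4/9)*x^2*a^2*c^2*d^2 + (2/9)*x^2*a^2*c^2*b*d + (4/9)*x^2*a^2*c^2*b^2 + (4/9)*x^2*a^3*b*d^2 + (4/9)*x^2*a^3*b^2*d + (-1/9)*x^4 + (-4/9)*x^4*d^2 + (-2/9)*x^4*b*d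 + (-4/9)*x^4*b^2 + (-1/9)*x^4*a*c) * ha + ((-1) + (-1)*b*d + (1/3)*x^2 + (1/9)*x^2*b*d + (4/9)*x^2*c^3*d + (4/9)*x^2*c^3*b + (4/9)*x^2*a^3*d + (4/9)*x^2*a^3*b + (-2/9)*x^4) * hb

set_option maxHeartbeats 4000000 in
open Complex Polynomial in
/-- The characteristic polynomial of the 6×6 multiplier matrix of the hexagonal
Grover walk (coin `X ⊗ G₃`) equals
`(λ² − 1)(λ⁴ − (2/9)(4cos 2θ₂ + 8cos 3θ₁ cos θ₂ − 3)λ² + 1)`. -/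
theorem hexagonal_multiplier_charpoly (θ₁ θ₂ : ℝ) :
    let K : Matrix (Fin 6) (Fin 6) ℂ := Matrix.of fun i j =>
      if (i.val < 3) = (j.val < 3) then 0
      else if i.val % 3 = j.val % 3 then -(1 / 3) else 2 / 3
    let dvec : Fin 6 → ℂ :=
      ![exp (2 * I * θ₁), exp (I * (θ₂ - θ₁)), exp (-(I * (θ₁ + θ₂))),
        exp (-(2 * I * θ₁)), exp (I * (θ₁ - θ₂)), exp (I * (θ₁ + θ₂))]
    let M : Matrix (Fin 6) (Fin 6) ℂ := Matrix.of fun i j => dvec i * K i j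
    M.charpoly = (X ^ 2 - 1) *
      (X ^ 4 -
        C (((2 / 9) * (4 * Real.cos (2 * θ₂) +
          8 * Real.cos (3 * θ₁) * Real.cos θ₂ - 3) : ℝ) : ℂ) * X ^ 2 + 1) := by
  intro K dvec M
  set a : ℂ := Complex.exp (θ₁ * I) with ha_def
  set b : ℂ := Complex.exp (θ₂ * I) with hb_def
  set c : ℂ := Complex.exp (-(θ₁ * I)) with hc_def
  set d : ℂ := Complex.exp (-(θ₂ * I)) with hd_def
  have ha : a * c = 1 := by rw [ha_def, hc_def, ← Complex.exp_add]; simp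
  have hb : b * d = 1 := by rw [hb_def, hd_def, ← Complex.exp_add]; simp
  have E1 : exp (2 * I * θ₁) = a ^ 2 := by
    rw [ha_def, ← Complex.exp_nat_mul]; ring_nf
  have E2 : exp (I * (θ₂ - θ₁)) = b * c := by
    rw [hb_def, hc_def, ← Complex.exp_add]; ring_nf
  have E3 : exp (-(I * (θ₁ + θ₂))) = c * d := by
    rw [hc_def, hd_def, ← Complex.exp_add]; ring_nf
  have E4 : exp (-(2 * I * θ₁)) = c ^ 2 := by
    rw [hc_def, ← Complex.exp_nat_mul]; ring_nf
  have E5 : exp (I * (θ₁ - θ₂)) = a * d := by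
    rw [ha_def, hd_def, ← Complex.exp_add]; ring_nf
  have E6 : exp (I * (θ₁ + θ₂)) = a * b := by
    rw [ha_def, hb_def, ← Complex.exp_add]; ring_nf
  have hcoeff : (((2 / 9) * (4 * Real.cos (2 * θ₂) +
          8 * Real.cos (3 * θ₁) * Real.cos θ₂ - 3) : ℝ) : ℂ)
      = (2/9)*(2*((b*b)+(d*d))+2*((a*a*a)+(c*c*c))*(b+d)-3) := by
    have c1 : ((Real.cos (2 * θ₂) : ℝ) : ℂ) = (b * b + d * d) / 2 := by
      rw [Complex.ofReal_cos, Complex.cos, hb_def, hd_def, ← Complex.exp_add, ← Complex.exp_add]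
      push_cast
      ring_nf
    have c2 : ((Real.cos (3 * θ₁) : ℝ) : ℂ) = (a * a * a + c * c * c) / 2 := by
      rw [Complex.ofReal_cos, Complex.cos, ha_def, hc_def,
        ← Complex.exp_add, ← Complex.exp_add, ← Complex.exp_add, ← Complex.exp_add]
      push_cast
      ring_nf
    have c3 : ((Real.cos θ₂ : ℝ) : ℂ) = (b + d) / 2 := by
      rw [Complex.ofReal_cos, Complex.cos, hb_def, hd_def]
      ring_nf
    push_cast [c1, c2, c3]
    ring
  apply Polynomial.eq_of_infinite_eval_eq
  apply Set.Infinite.mono (s := {(0:ℂ)}ᶜ)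
  · intro x hx0
    have hx0' : x ≠ 0 := hx0
    have hev : Polynomial.eval x M.charpoly
        = (Polynomial.eval (Matrix.scalar (Fin 6) x) (Polynomial.X - Polynomial.C M)).det := by
      rw [Matrix.charpoly, _root_.eval_det, Matrix.matPolyEquiv_charmatrix]
    have hscal : Polynomial.eval (Matrix.scalar (Fin 6) x) (Polynomial.X - Polynomial.C M)
        = Matrix.scalar (Fin 6) x - M := by
      simp
    have hM : Matrix.scalar (Fin 6) x - M =
        (Matrix.fromBlocks (x • (1 : Matrix (Fin 3) (Fin 3) ℂ))
          (-(!![-(a^2)/3, 2*(a^2)/3, 2*(a^2)/3;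
              2*(b*c)/3, -(b*c)/3, 2*(b*c)/3;
              2*(c*d)/3, 2*(c*d)/3, -(c*d)/3]))
          (-(!![-(c^2)/3, 2*(c^2)/3, 2*(c^2)/3;
              2*(a*d)/3, -(a*d)/3, 2*(a*d)/3;
              2*(a*b)/3, 2*(a*b)/3, -(a*b)/3]))
          (x • (1 : Matrix (Fin 3) (Fin 3) ℂ))).submatrix
            finSumFinEquiv.symm finSumFinEquiv.symm := by
      have s0 : finSumFinEquiv.symm (0 : Fin 6) = (Sum.inl 0 : Fin 3 ⊕ Fin 3) := by decide
      have s1 : finSumFinEquiv.symm (1 : Fin 6) = (Sum.inl 1 : Fin 3 ⊕ Fin 3) := by decide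
      have s2 : finSumFinEquiv.symm (2 : Fin 6) = (Sum.inl 2 : Fin 3 ⊕ Fin 3) := by decide
      have s3 : finSumFinEquiv.symm (3 : Fin 6) = (Sum.inr 0 : Fin 3 ⊕ Fin 3) := by decide
      have s4 : finSumFinEquiv.symm (4 : Fin 6) = (Sum.inr 1 : Fin 3 ⊕ Fin 3) := by decide
      have s5 : finSumFinEquiv.symm (5 : Fin 6) = (Sum.inr 2 : Fin 3 ⊕ Fin 3) := by decide
      have v0 : ((0 : Fin 6) : ℕ) = 0 := rfl
      have v1 : ((1 : Fin 6) : ℕ) = 1 := rfl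
      have v2 : ((2 : Fin 6) : ℕ) = 2 := rfl
      have v3 : ((3 : Fin 6) : ℕ) = 3 := rfl
      have v4 : ((4 : Fin 6) : ℕ) = 4 := rfl
      have v5 : ((5 : Fin 6) : ℕ) = 5 := rfl
      have w5 : (![a ^ 2, b * c, c * d, c ^ 2, a * d, a * b] : Fin 6 → ℂ) 5 = a * b := rfl
      ext i j
      fin_cases i <;> fin_cases j <;>
        simp [M, dvec, K, Matrix.submatrix_apply, Matrix.of_apply, Matrix.scalar_apply,
          Matrix.diagonal_apply, s0, s1, s2, s3, s4, s5,
          Matrix.fromBlocks_apply₁₁, Matrix.fromBlocks_apply₁₂, Matrix.fromBlocks_apply₂₁,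
          Matrix.fromBlocks_apply₂₂, Fin.ext_iff, v0, v1, v2, v3, v4, v5, w5, Matrix.cons_val_succ, Matrix.cons_val_zero, E1, E2, E3, E4, E5, E6] <;>
        norm_num <;> ring
    have hx1 : x * x⁻¹ = 1 := mul_inv_cancel₀ hx0'
    simp only [Set.mem_setOf_eq]
    rw [hev, hscal, hM, Matrix.det_submatrix_equiv_self,
      hex_key x x⁻¹ a c b d hx1 ha hb]
    rw [hcoeff]
    simp only [Polynomial.eval_mul, Polynomial.eval_add, Polynomial.eval_sub,
      Polynomial.eval_pow, Polynomial.eval_X, Polynomial.eval_C, Polynomial.eval_one]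
  · exact Set.Finite.infinite_compl (Set.finite_singleton 0)
end
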